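/- Let π ⊆ ℝ^k be a rational linear subspace, i.e., π_ℤ = π ∩ ℤ^k is a lattice in π. Then the (dim π)-dimensional Lebesgue volume of π ∩ [0,1]^k is at most the covolume of the lattice π_ℤ in π. -/

import Mathlib

open MeasureTheory Pointwise

set_option maxHeartbeats 1000000 in
/-- Let `π ⊆ ℝ^k` be a rational linear subspace (spanned by vectors with rational
coordinates), and let `L = π ∩ ℤ^k`, a full-rank lattice in `π`. Then the
`dim π`-dimensional Lebesgue volume of `π ∩ [0,1]^k` is at most the covolume of `L` in `π`. -/
theorem stmt_9 (k : ℕ) (π : Submodule ℝ (EuclideanSpace ℝ (Fin k)))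
    (hrat : ∃ s : Set (EuclideanSpace ℝ (Fin k)),
      (∀ v ∈ s, ∀ i, ∃ q : ℚ, v i = (q : ℝ)) ∧ Submodule.span ℝ s = π)
    (L : Submodule ℤ π)
    (hL : ∀ x : π, x ∈ L ↔ ∀ i, ∃ m : ℤ, (x : EuclideanSpace ℝ (Fin k)) i = (m : ℝ))
    [DiscreteTopology L] [IsZLattice ℝ L] :
    volume {x : π | ∀ i, (x : EuclideanSpace ℝ (Fin k)) i ∈ Set.Icc (0 : ℝ) 1} ≤
      ENNReal.ofReal (ZLattice.covolume L) := by
  classical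
  set E := EuclideanSpace ℝ (Fin k)
  -- the coordinate functionals on π
  set φ : Fin k → (π →ₗ[ℝ] ℝ) := fun i =>
    (EuclideanSpace.projₗ i).comp π.subtype with hφ
  have hφval : ∀ (i : Fin k) (x : π), φ i x = (x : E) i := fun i x => rfl
  have hφcont : ∀ i : Fin k, Continuous (φ i) := fun i =>
    ((EuclideanSpace.proj i : E →L[ℝ] ℝ).continuous).comp continuous_subtype_val
  -- the fundamental domain
  set b := Module.Free.chooseBasis ℤ L
  have hfund := ZLattice.isAddFundamentalDomain b (volume : Measure π)
  set F := ZSpan.fundamentalDomain (b.ofZLatticeBasis ℝ) with hF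
  have hFvol : volume F ≠ ⊤ :=
    ((ZSpan.fundamentalDomain_isBounded (b.ofZLatticeBasis ℝ)).measure_lt_top).ne
  have hcov : ENNReal.ofReal (ZLattice.covolume L) = volume F := by
    rw [ZLattice.covolume_eq_measure_fundamentalDomain L volume hfund,
      measureReal_def, ENNReal.ofReal_toReal hFvol]
  set S : Set π := {x : π | ∀ i, (x : E) i ∈ Set.Icc (0 : ℝ) 1} with hS
  set S' : Set π := {x : π | ∀ i, (x : E) i ∈ Set.Ico (0 : ℝ) 1} with hS'
  -- each hyperplane `x i = 1` has measure zero in π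
  have hzero : ∀ i : Fin k, volume {x : π | (x : E) i = 1} = 0 := by
    intro i
    by_cases h : ∃ x₀ : π, (x₀ : E) i = 1
    · obtain ⟨x₀, hx₀⟩ := h
      have hker : LinearMap.ker (φ i) ≠ ⊤ := by
        intro htop
        have : φ i x₀ = 0 := by
          have : x₀ ∈ LinearMap.ker (φ i) := htop ▸ Submodule.mem_top
          simpa using this
        rw [hφval i x₀, hx₀] at this
        norm_num at this
      have hset : {x : π | (x : E) i = 1} =
          (fun x : π => x + (-x₀)) ⁻¹' (LinearMap.ker (φ i) : Set π) := by
        ext x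
        simp only [Set.mem_setOf_eq, Set.mem_preimage, SetLike.mem_coe,
          LinearMap.mem_ker, hφval, Submodule.coe_add, Submodule.coe_neg,
          PiLp.add_apply, PiLp.neg_apply, hx₀]
        constructor <;> intro hx <;> linarith
      rw [hset, measure_preimage_add_right]
      exact Measure.addHaar_submodule volume _ hker
    · have : {x : π | (x : E) i = 1} = ∅ := by
        ext x; simp only [Set.mem_setOf_eq, Set.mem_empty_iff_false, iff_false]
        exact fun hx => h ⟨x, hx⟩
      simp [this]
  -- `S` and `S'` differ by a null set
  have hSS' : volume S ≤ volume S' := by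
    have hsub : S ⊆ S' ∪ ⋃ i, {x : π | (x : E) i = 1} := by
      intro x hx
      by_cases h : x ∈ S'
      · exact Or.inl h
      · right
        simp only [hS', Set.mem_setOf_eq, not_forall] at h
        obtain ⟨i, hi⟩ := h
        have h1 := hx i
        refine Set.mem_iUnion.2 ⟨i, ?_⟩
        simp only [Set.mem_setOf_eq]
        rcases h1 with ⟨h1a, h1b⟩
        by_contra hne
        exact hi ⟨h1a, lt_of_le_of_ne h1b hne⟩
    calc volume S ≤ volume (S' ∪ ⋃ i, {x : π | (x : E) i = 1}) := measure_mono hsub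
      _ ≤ volume S' + volume (⋃ i, {x : π | (x : E) i = 1}) := measure_union_le _ _
      _ ≤ volume S' + 0 := by
          gcongr
          exact le_of_eq (measure_iUnion_null fun i => hzero i)
      _ = volume S' := by simp
  -- `S'` is measurable
  have hS'meas : MeasurableSet S' := by
    have : S' = ⋂ i, (φ i) ⁻¹' Set.Ico (0 : ℝ) 1 := by
      ext x; simp [hS', hφval]
    rw [this]
    exact MeasurableSet.iInter fun i =>
      (measurableSet_Ico).preimage (hφcont i).measurable
  -- the translates of `S'` by `L` are pairwise disjoint
  have hd : Pairwise (Function.onFun Disjoint fun g : L => g +ᵥ S') := by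
    intro g₁ g₂ hne
    rw [Function.onFun, Set.disjoint_left]
    rintro x ⟨a, ha, rfl⟩ ⟨c, hc, hgc⟩
    apply hne
    have heq : ((g₁ : π)) + a = ((g₂ : π)) + c := hgc.symm
    have hdiff : ((g₁ : π) - (g₂ : π)) ∈ L := L.sub_mem g₁.2 g₂.2
    have hcoord : ∀ i, (((g₁ : π) - (g₂ : π) : π) : E) i = 0 := by
      intro i
      obtain ⟨m, hm⟩ := (hL _).1 hdiff i
      have heq' : ((((g₁ : π) + a : π) : E)) i = ((((g₂ : π) + c : π) : E)) i := by
        rw [heq]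
      simp only [Submodule.coe_add] at heq'
      have hsub : (((g₁ : π) - (g₂ : π) : π) : E) i = (c : E) i - (a : E) i := by
        simp only [Submodule.coe_sub]
        have : ((g₁ : π) : E) i + (a : E) i = ((g₂ : π) : E) i + (c : E) i := heq'
        simp only [PiLp.sub_apply, PiLp.add_apply] at this ⊢
        linarith
      rw [hm] at hsub
      have hai := ha i
      have hci := hc i
      rcases hai with ⟨ha0, ha1⟩
      rcases hci with ⟨hc0, hc1⟩
      have hm0 : m = 0 := by
        by_contra hm0
        rcases lt_or_gt_of_ne hm0 with h' | h'
        · have : (m : ℝ) ≤ -1 := by exact_mod_cast Int.le_sub_one_of_lt h'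
          linarith
        · have : (1 : ℝ) ≤ (m : ℝ) := by exact_mod_cast h'
          linarith
      rw [hm, hm0]; norm_num
    have : ((g₁ : π) - (g₂ : π) : π) = 0 := by
      ext1
      apply PiLp.ext
      intro i
      simpa using hcoord i
    have hg : (g₁ : π) = (g₂ : π) := by
      have := sub_eq_zero.mp this
      exact this
    exact Subtype.ext hg
  -- conclude
  haveI : MeasurableVAdd (↥L) (↥π) := by
    refine { measurable_const_vadd := ?_, measurable_vadd_const := ?_ }
    · intro g
      show Measurable fun x : π => (g : π) + x
      exact measurable_id.const_add _
    · intro x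
      show Measurable fun g : L => (g : π) + x
      exact measurable_subtype_coe.add_const x
  haveI : VAddInvariantMeasure (↥L) (↥π) volume := by
    constructor
    intro c s _
    show volume ((fun x : π => (c : π) + x) ⁻¹' s) = volume s
    exact measure_preimage_add volume _ s
  rw [hcov]
  refine le_trans hSS' ?_
  refine hfund.measure_le_of_pairwise_disjoint hS'meas.nullMeasurableSet ?_
  intro g₁ g₂ hne
  exact Disjoint.aedisjoint <|
    ((hd hne).mono Set.inter_subset_left Set.inter_subset_left)
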